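/- For any set system D = (E, F), any X ⊆ E, and any Y ⊆ E: Y is feasible in D^{×|X} if and only if the number of feasible sets Z of D with Y − X ⊆ Z ⊆ Y is odd. -/
import Mathlib


open Finset Polynomial

variable {α : Type*} [DecidableEq α]

/-- The twist of a collection of feasible sets with respect to `A`. -/
noncomputable def SS.twist (A : Finset α) (F : Finset (Finset α)) : Finset (Finset α) :=
  F.image (fun X => symmDiff A X)

/-- Loop complementation at a single element `e`. -/
noncomputable def SS.lc (e : α) (F : Finset (Finset α)) : Finset (Finset α) :=
  symmDiff F ((F.filter (fun X => e ∉ X)).image (insert e))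

/-- The two generating operations: twist `*` and loop complementation `×`. -/
inductive SS.Op | star | cross

/-- Apply a single operation at a single element. -/
noncomputable def SS.opElem : SS.Op → α → Finset (Finset α) → Finset (Finset α)
  | .star, e, F => SS.twist {e} F
  | .cross, e, F => SS.lc e F

/-- Apply a word in `{*, ×}` at a single element. -/
noncomputable def SS.wordElem (w : List SS.Op) (e : α) (F : Finset (Finset α)) : Finset (Finset α) :=
  w.foldl (fun F o => SS.opElem o e F) F

/-- Apply a word in `{*, ×}` elementwise on a subset `A`. -/
noncomputable def SS.wordOn (w : List SS.Op) (A : Finset α) (F : Finset (Finset α)) : Finset (Finset α) :=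
  A.toList.foldl (fun F e => SS.wordElem w e F) F

/-- Size of a largest feasible set. -/
noncomputable def SS.rmax (F : Finset (Finset α)) : ℕ := F.sup Finset.card

/-- Size of a smallest feasible set. -/
noncomputable def SS.rmin (F : Finset (Finset α)) : ℕ := sInf (Finset.card '' (F : Set (Finset α)))

/-- The width of a set system. -/
noncomputable def SS.width (F : Finset (Finset α)) : ℕ := SS.rmax F - SS.rmin F

/-- The minimum-cardinality feasible sets. -/
noncomputable def SS.Fmin (F : Finset (Finset α)) : Finset (Finset α) :=
  F.filter (fun X => X.card = SS.rmin F)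

/-- The maximum-cardinality feasible sets. -/
noncomputable def SS.Fmax (F : Finset (Finset α)) : Finset (Finset α) :=
  F.filter (fun X => X.card = SS.rmax F)

/-- The partial-`w` polynomial of a set system with ground set `E`. -/
noncomputable def SS.poly (w : List SS.Op) (E : Finset α) (F : Finset (Finset α)) :
    Polynomial ℤ :=
  ∑ A ∈ E.powerset, (Polynomial.X : Polynomial ℤ) ^ SS.width (SS.wordOn w A F)

/-- A proper set system satisfying the symmetric exchange axiom. -/
noncomputable def SS.IsDeltaMatroid (F : Finset (Finset α)) : Prop :=
  F.Nonempty ∧ ∀ X ∈ F, ∀ Y ∈ F, ∀ u ∈ symmDiff X Y,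
    ∃ v ∈ symmDiff X Y, symmDiff X {u, v} ∈ F

/-- Apply a sequence of single-element twists and loop complementations. -/
noncomputable def SS.seqApply : List (SS.Op × α) → Finset (Finset α) → Finset (Finset α)
  | [], F => F
  | (o, e) :: s, F => SS.seqApply s (SS.opElem o e F)

/-- A set system is vf-safe if every sequence of single-element twists and loop
complementations yields a delta-matroid. -/
noncomputable def SS.VfSafe (F : Finset (Finset α)) : Prop :=
  ∀ s : List (SS.Op × α), SS.IsDeltaMatroid (SS.seqApply s F)

/-- The direct sum of two set systems. -/
noncomputable def SS.dsum (F F' : Finset (Finset α)) : Finset (Finset α) :=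
  (F ×ˢ F').image (fun p => p.1 ∪ p.2)

open SS

lemma card_symmDiff_aux (A B : Finset (Finset α)) :
    (symmDiff A B).card + 2 * (A ∩ B).card = A.card + B.card := by
  rw [symmDiff_def, Finset.sup_eq_union, Finset.card_union_of_disjoint (disjoint_sdiff_sdiff)]
  have h1 := Finset.card_sdiff_add_card_inter A B
  have h2 := Finset.card_sdiff_add_card_inter B A
  rw [Finset.inter_comm B A] at h2
  omega

lemma odd_card_symmDiff (A B : Finset (Finset α)) :
    Odd (symmDiff A B).card ↔ ¬ (Odd A.card ↔ Odd B.card) := by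
  have h := card_symmDiff_aux A B
  simp only [Nat.odd_iff] at *
  omega

lemma filter_symmDiff' (A B : Finset (Finset α)) (p : Finset α → Prop) [DecidablePred p] :
    (symmDiff A B).filter p = symmDiff (A.filter p) (B.filter p) := by
  ext x; simp [Finset.mem_symmDiff, Finset.mem_filter]; tauto

lemma lc_parity (F : Finset (Finset α)) (e : α) (Y S : Finset α) (he : e ∉ S) :
    Odd ((SS.lc e F).filter (fun Z => Y \ S ⊆ Z ∧ Z ⊆ Y)).card ↔
    Odd (F.filter (fun Z => Y \ insert e S ⊆ Z ∧ Z ⊆ Y)).card := by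
  have hGcard : (((F.filter (fun X => e ∉ X)).image (insert e)).filter
        (fun Z => Y \ S ⊆ Z ∧ Z ⊆ Y)).card
      = (F.filter (fun W => e ∉ W ∧ Y \ S ⊆ insert e W ∧ insert e W ⊆ Y)).card := by
    rw [Finset.filter_image, Finset.card_image_of_injOn, Finset.filter_filter]
    intro a ha b hb hab
    simp only [Finset.coe_filter, Set.mem_setOf_eq, Finset.mem_filter] at ha hb
    have : (insert e a).erase e = (insert e b).erase e := by rw [hab]
    rwa [Finset.erase_insert ha.1.2, Finset.erase_insert hb.1.2] at this
  rw [SS.lc, filter_symmDiff', odd_card_symmDiff, hGcard]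
  by_cases hY : e ∈ Y
  · have hsplit : (F.filter (fun Z => Y \ insert e S ⊆ Z ∧ Z ⊆ Y)).card
        = (F.filter (fun Z => Y \ S ⊆ Z ∧ Z ⊆ Y)).card
          + (F.filter (fun W => e ∉ W ∧ Y \ S ⊆ insert e W ∧ insert e W ⊆ Y)).card := by
      rw [← Finset.card_filter_add_card_filter_not
        (s := F.filter (fun Z => Y \ insert e S ⊆ Z ∧ Z ⊆ Y)) (p := fun Z => e ∈ Z),
        Finset.filter_filter, Finset.filter_filter]
      congr 1
      · refine congrArg Finset.card (Finset.filter_congr ?_)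
        intro Z _
        constructor
        · rintro ⟨⟨h1, h2⟩, h3⟩
          refine ⟨fun x hx => ?_, h2⟩
          rcases Finset.mem_sdiff.mp hx with ⟨hxY, hxS⟩
          by_cases hxe : x = e
          · exact hxe ▸ h3
          · exact h1 (Finset.mem_sdiff.mpr ⟨hxY, by simp [hxe, hxS]⟩)
        · rintro ⟨h1, h2⟩
          have he' : e ∈ Z := h1 (Finset.mem_sdiff.mpr ⟨hY, he⟩)
          refine ⟨⟨fun x hx => ?_, h2⟩, he'⟩
          rcases Finset.mem_sdiff.mp hx with ⟨hxY, hxS⟩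
          exact h1 (Finset.mem_sdiff.mpr ⟨hxY, fun h => hxS (Finset.mem_insert.mpr (Or.inr h))⟩)
      · refine congrArg Finset.card (Finset.filter_congr ?_)
        intro Z _
        constructor
        · rintro ⟨⟨h1, h2⟩, h3⟩
          refine ⟨h3, fun x hx => ?_, ?_⟩
          · rcases Finset.mem_sdiff.mp hx with ⟨hxY, hxS⟩
            by_cases hxe : x = e
            · simp [hxe]
            · exact Finset.mem_insert.mpr (Or.inr (h1 (Finset.mem_sdiff.mpr
                ⟨hxY, by simp [hxe, hxS]⟩)))
          · intro x hx
            rcases Finset.mem_insert.mp hx with rfl | hx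
            · exact hY
            · exact h2 hx
        · rintro ⟨h1, h2, h3⟩
          refine ⟨⟨fun x hx => ?_, fun x hx => h3 (Finset.mem_insert.mpr (Or.inr hx))⟩, h1⟩
          rcases Finset.mem_sdiff.mp hx with ⟨hxY, hxS⟩
          have hxe : x ≠ e := fun h => hxS (h ▸ Finset.mem_insert_self e S)
          rcases Finset.mem_insert.mp (h2 (Finset.mem_sdiff.mpr
            ⟨hxY, fun h => hxS (Finset.mem_insert.mpr (Or.inr h))⟩)) with h | h
          · exact absurd h hxe
          · exact h
    rw [hsplit, Nat.odd_add]
    simp only [Nat.odd_iff, Nat.even_iff]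
    omega
  · have h1 : (F.filter (fun Z => Y \ insert e S ⊆ Z ∧ Z ⊆ Y))
        = F.filter (fun Z => Y \ S ⊆ Z ∧ Z ⊆ Y) := by
      apply Finset.filter_congr
      intro Z _
      have hYS : Y \ insert e S = Y \ S := by
        ext x; simp only [Finset.mem_sdiff, Finset.mem_insert]
        constructor
        · rintro ⟨hx, h⟩; exact ⟨hx, fun hc => h (Or.inr hc)⟩
        · rintro ⟨hx, h⟩
          refine ⟨hx, ?_⟩
          rintro (rfl | hc)
          · exact hY hx
          · exact h hc
      rw [hYS]
    have h2 : (F.filter (fun W => e ∉ W ∧ Y \ S ⊆ insert e W ∧ insert e W ⊆ Y)) = ∅ := by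
      apply Finset.filter_false_of_mem
      rintro W _ ⟨_, _, hsub⟩
      exact hY (hsub (Finset.mem_insert_self e W))
    rw [h1, h2]
    simp [Nat.odd_iff]

lemma foldl_lc_mem (Y : Finset α) : ∀ (L : List α) (F : Finset (Finset α)), L.Nodup →
    (Y ∈ L.foldl (fun F e => SS.lc e F) F ↔
      Odd (F.filter (fun Z => Y \ L.toFinset ⊆ Z ∧ Z ⊆ Y)).card)
  | [], F, _ => by
    simp only [List.foldl_nil, List.toFinset_nil, Finset.sdiff_empty]
    have h : F.filter (fun Z => Y ⊆ Z ∧ Z ⊆ Y) = F.filter (fun Z => Z = Y) := by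
      apply Finset.filter_congr
      intro Z _
      constructor
      · rintro ⟨h1, h2⟩; exact Finset.Subset.antisymm h2 h1
      · rintro rfl; exact ⟨Finset.Subset.refl _, Finset.Subset.refl _⟩
    rw [h, Finset.filter_eq']
    by_cases hY : Y ∈ F <;> simp [hY, Nat.odd_iff]
  | e :: L, F, hnd => by
    rw [List.foldl_cons]
    rw [foldl_lc_mem Y L (SS.lc e F) (List.nodup_cons.mp hnd).2]
    have he : e ∉ L.toFinset := by
      simp only [List.mem_toFinset]; exact (List.nodup_cons.mp hnd).1
    rw [lc_parity F e Y L.toFinset he]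
    simp [List.toFinset_cons]


theorem stmt17 (F : Finset (Finset α)) (X Y : Finset α) :
    Y ∈ SS.wordOn [SS.Op.cross] X F ↔
      Odd (F.filter (fun Z => Y \ X ⊆ Z ∧ Z ⊆ Y)).card := by
  have hw : SS.wordOn [SS.Op.cross] X F = X.toList.foldl (fun F e => SS.lc e F) F := rfl
  rw [hw]
  have := foldl_lc_mem Y X.toList F X.nodup_toList
  rwa [Finset.toList_toFinset] at this
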